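/- Let G ≤ Sym(M) act 2-homogeneously on M, where |M| = m ≥ 5, let V = F_2^m with G acting by permuting coordinates, and let C be a G-invariant F_2-subspace of V whose minimum distance δ satisfies 4 ≤ δ < m. Then C is (X,2)-neighbour-transitive, where X = T_C ⋊ G = {v ↦ v^σ + c : σ ∈ G, c ∈ C}. -/

import Mathlib

open Equiv

namespace Paper

/-- A Hamming-graph automorphism of `Fin m → Q` given by entrywise permutations `h`
and a permutation `σ` of the entries. -/
def IsQAutPair {m : ℕ} {Q : Type*} (g : Perm (Fin m → Q)) (h : Fin m → Perm Q)
    (σ : Perm (Fin m)) : Prop :=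
  ∀ α i, g α i = h i (α (σ.symm i))

/-- `g` is an automorphism of the Hamming graph `H(m,q)`. -/
def IsQAut {m : ℕ} {Q : Type*} (g : Perm (Fin m → Q)) : Prop :=
  ∃ h σ, IsQAutPair g h σ

/-- The permutation group `X_i^{Q_i}` induced on the alphabet in entry `i`
by the stabiliser in `X` of the entry `i`. -/
def indQ {m : ℕ} {Q : Type*} (X : Set (Perm (Fin m → Q))) (i : Fin m) : Set (Perm Q) :=
  {π | ∃ g ∈ X, ∃ h σ, IsQAutPair g h σ ∧ σ i = i ∧ h i = π}

/-- `C_s`, the set of vertices at Hamming distance exactly `s` from the code `C`. -/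
def distSet {m : ℕ} {Q : Type*} [DecidableEq Q] (C : Set (Fin m → Q)) (s : ℕ) :
    Set (Fin m → Q) :=
  {v | (∃ c ∈ C, hammingDist v c = s) ∧ ∀ c ∈ C, s ≤ hammingDist v c}

/-- `C` is `(X,s)`-neighbour-transitive: `X` acts transitively on each of
`C = C_0, C_1, …, C_s`. -/
def NbrTrans {m : ℕ} {Q : Type*} [DecidableEq Q] (X : Set (Perm (Fin m → Q)))
    (C : Set (Fin m → Q)) (s : ℕ) : Prop :=
  ∀ j ≤ s, ∀ u ∈ distSet C j, ∀ v ∈ distSet C j, ∃ g ∈ X, g u = v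

/-- `δ` is the minimum distance of the code `C`. -/
def IsMinDist {m : ℕ} {Q : Type*} [DecidableEq Q] (C : Set (Fin m → Q)) (δ : ℕ) : Prop :=
  (∃ u ∈ C, ∃ v ∈ C, u ≠ v ∧ hammingDist u v = δ) ∧
  ∀ u ∈ C, ∀ v ∈ C, u ≠ v → δ ≤ hammingDist u v

/-- The vertex set `V = F_2^m` of the binary Hamming graph `H(m,2)`. -/
abbrev BV (m : ℕ) : Type := Fin m → ZMod 2

/-- `g` is an automorphism of the binary Hamming graph `H(m,2)`:
`g : v ↦ v^σ + c` for some `σ ∈ Sym(M)` and `c ∈ V`. -/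
def IsB2Aut {m : ℕ} (g : Perm (BV m)) : Prop :=
  ∃ (σ : Perm (Fin m)) (c : BV m), ∀ v, g v = (fun i => v (σ.symm i)) + c

/-- The dual of a binary code under the standard inner product. -/
def dualCode {m : ℕ} (D : Set (BV m)) : Set (BV m) :=
  {w | ∀ v ∈ D, (∑ i, v i * w i) = 0}

/-- The permutation `v ↦ v^σ + d` of `F_2^m`. -/
def tp {m : ℕ} (σ : Perm (Fin m)) (d : BV m) : Perm (BV m) where
  toFun v := (fun i => v (σ.symm i)) + d
  invFun v := fun i => v (σ i) + d (σ i)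
  left_inv v := by
    funext t
    have h : ∀ a b : ZMod 2, a + b + b = a := by decide
    simp [Pi.add_apply, h]
  right_inv v := by
    funext t
    have h : ∀ a b : ZMod 2, a + b + b = a := by decide
    simp [Pi.add_apply, h]

lemma tp_apply {m : ℕ} (σ : Perm (Fin m)) (d : BV m) (v : BV m) :
    tp σ d v = (fun i => v (σ.symm i)) + d := rfl

lemma existsTrans {m : ℕ} (hm : 3 ≤ m) (G : Subgroup (Perm (Fin m)))
    (hG : ∀ i j k l : Fin m, i ≠ j → k ≠ l →
      ∃ σ ∈ G, (σ i = k ∧ σ j = l) ∨ (σ i = l ∧ σ j = k))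
    (i k : Fin m) : ∃ σ ∈ G, σ i = k := by
  by_cases hik : i = k
  · exact ⟨1, G.one_mem, hik⟩
  · have hne : (({i, k} : Finset (Fin m))ᶜ).Nonempty := by
      rw [← Finset.card_pos, Finset.card_compl]
      have h2 : ({i, k} : Finset (Fin m)).card ≤ 2 := by
        apply le_trans (Finset.card_insert_le _ _); simp
      simp only [Fintype.card_fin]
      omega
    obtain ⟨l, hl⟩ := hne
    simp only [Finset.mem_compl, Finset.mem_insert, Finset.mem_singleton, not_or] at hl
    obtain ⟨σ, hσG, hc⟩ := hG i l k l (fun h => hl.1 h.symm) (fun h => hl.2 h.symm)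
    rcases hc with ⟨h1, _⟩ | ⟨h1, h2⟩
    · exact ⟨σ, hσG, h1⟩
    · exact ⟨σ * σ, G.mul_mem hσG hσG, by rw [Perm.mul_apply, h1, h2]⟩

lemma dist_one {m : ℕ} {u c : BV m} (h : hammingDist u c = 1) :
    ∃ i : Fin m, ∀ t, u t = c t + (if t = i then 1 else 0) := by
  have h' : ({t | u t ≠ c t} : Finset (Fin m)).card = 1 := h
  obtain ⟨i, hi⟩ := Finset.card_eq_one.mp h'
  refine ⟨i, fun t => ?_⟩
  have hmem : u t ≠ c t ↔ t = i := by
    rw [show (u t ≠ c t) = (t ∈ ({t | u t ≠ c t} : Finset (Fin m))) by simp, hi,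
      Finset.mem_singleton]
  have hne : ∀ a b : ZMod 2, a ≠ b → a = b + 1 := by decide
  by_cases ht : t = i
  · simpa [ht] using hne _ _ (hmem.mpr ht)
  · have heq : u t = c t := not_not.mp (fun hc2 => ht (hmem.mp hc2))
    simp [if_neg ht, heq]

lemma dist_two {m : ℕ} {u c : BV m} (h : hammingDist u c = 2) :
    ∃ i j : Fin m, i ≠ j ∧ ∀ t, u t = c t + (if t = i ∨ t = j then 1 else 0) := by
  have h' : ({t | u t ≠ c t} : Finset (Fin m)).card = 2 := h
  obtain ⟨i, j, hij, hset⟩ := Finset.card_eq_two.mp h'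
  refine ⟨i, j, hij, fun t => ?_⟩
  have hmem : u t ≠ c t ↔ (t = i ∨ t = j) := by
    rw [show (u t ≠ c t) = (t ∈ ({t | u t ≠ c t} : Finset (Fin m))) by simp, hset]
    simp
  have hne : ∀ a b : ZMod 2, a ≠ b → a = b + 1 := by decide
  by_cases ht : t = i ∨ t = j
  · simpa [ht] using hne _ _ (hmem.mpr ht)
  · have heq : u t = c t := not_not.mp (fun hc2 => ht (hmem.mp hc2))
    simp [if_neg ht, heq]

theorem stmt10 (m δ : ℕ) (hm : 5 ≤ m)
    (G : Subgroup (Perm (Fin m)))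
    (hG : ∀ i j k l : Fin m, i ≠ j → k ≠ l →
      ∃ σ ∈ G, (σ i = k ∧ σ j = l) ∨ (σ i = l ∧ σ j = k))
    (C : Submodule (ZMod 2) (BV m))
    (hInv : ∀ σ ∈ G, ∀ v ∈ C, (fun i => v (σ.symm i)) ∈ C)
    (hδ : IsMinDist (C : Set (BV m)) δ) (h4 : 4 ≤ δ) (hlt : δ < m)
    (X : Set (Perm (BV m)))
    (hX : X = {g | ∃ σ ∈ G, ∃ c ∈ C, ∀ v, g v = (fun i => v (σ.symm i)) + c}) :
    NbrTrans X (C : Set (BV m)) 2 := by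
  subst hX
  have key : ∀ a b x : ZMod 2, a + x + (b + a) = b + x := by decide
  intro j hj u hu v hv
  interval_cases j
  · -- j = 0
    obtain ⟨⟨c, hc, hdc⟩, -⟩ := hu
    obtain ⟨⟨c', hc', hdc'⟩, -⟩ := hv
    rw [hammingDist_eq_zero] at hdc hdc'
    subst hdc; subst hdc'
    refine ⟨tp 1 (u + v), ⟨1, G.one_mem, u + v, C.add_mem hc hc', fun w => rfl⟩, ?_⟩
    funext t
    show u ((1 : Perm (Fin m)).symm t) + (u + v) t = v t
    have h : ∀ a b : ZMod 2, a + (a + b) = b := by decide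
    simp [Pi.add_apply, h, Equiv.Perm.one_symm]
  · -- j = 1
    obtain ⟨⟨c, hc, hdc⟩, -⟩ := hu
    obtain ⟨⟨c', hc', hdc'⟩, -⟩ := hv
    obtain ⟨i, hi⟩ := dist_one hdc
    obtain ⟨k, hk⟩ := dist_one hdc'
    obtain ⟨σ, hσG, hσ⟩ := existsTrans (by omega) G hG i k
    refine ⟨tp σ (c' + fun t => c (σ.symm t)),
      ⟨σ, hσG, c' + fun t => c (σ.symm t),
        C.add_mem hc' (hInv σ hσG c hc), fun w => rfl⟩, ?_⟩
    funext t
    show u (σ.symm t) + (c' + fun t => c (σ.symm t)) t = v t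
    rw [hi, hk]
    have hiff : (σ.symm t = i) ↔ (t = k) := by rw [Equiv.symm_apply_eq, hσ]
    simp only [Pi.add_apply, if_congr hiff rfl rfl]
    exact key _ _ _
  · -- j = 2
    obtain ⟨⟨c, hc, hdc⟩, -⟩ := hu
    obtain ⟨⟨c', hc', hdc'⟩, -⟩ := hv
    obtain ⟨i, j, hij, hi⟩ := dist_two hdc
    obtain ⟨k, l, hkl, hk⟩ := dist_two hdc'
    obtain ⟨σ, hσG, hcases⟩ := hG i j k l hij hkl
    refine ⟨tp σ (c' + fun t => c (σ.symm t)),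
      ⟨σ, hσG, c' + fun t => c (σ.symm t),
        C.add_mem hc' (hInv σ hσG c hc), fun w => rfl⟩, ?_⟩
    funext t
    show u (σ.symm t) + (c' + fun t => c (σ.symm t)) t = v t
    rw [hi, hk]
    have hiff : (σ.symm t = i ∨ σ.symm t = j) ↔ (t = k ∨ t = l) := by
      rw [Equiv.symm_apply_eq, Equiv.symm_apply_eq]
      rcases hcases with ⟨h1, h2⟩ | ⟨h1, h2⟩ <;> rw [h1, h2]
      exact or_comm
    simp only [Pi.add_apply, if_congr hiff rfl rfl]
    exact key _ _ _

end Paper
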